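/- Suppose S satisfies the BRIP condition with parameters (η, ε), let {A_t}_{t≥0} be a sequence of subsets of {1,…,m} with |A_t| ≥ ηm, and for each t let w̃*_t ∈ argmin_w f̃^{A_t}(w) (assumed to exist, along with the auxiliary minimizers needed so that f(w̃*_t) ≤ κ² f(w*)). Suppose a sequence {w_t} satisfies f̃^{A_t}(w_{t+1}) − f̃^{A_t}(w̃*_t) ≤ γ (f̃^{A_t}(w_t) − f̃^{A_t}(w̃*_t)) for all t, for some 0 < γ < 1, where κ = (1+ε)/(1−ε) satisfies κγ < 1. Then for all t ≥ 1, f(w_t) ≤ (κγ)^t f(w_0) + (κ²(κ−γ)/(1−κγ)) f(w*). -/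

import Mathlib

open Matrix Finset

noncomputable section

namespace Stmt13

/-- The original objective `f(w) = ‖Xw − y‖² + λ h(w)`. -/
def objF {n p : ℕ} (X : Matrix (Fin n) (Fin p) ℝ) (y : Fin n → ℝ) (lam : ℝ)
    (h : (Fin p → ℝ) → ℝ) (w : Fin p → ℝ) : ℝ :=
  (X *ᵥ w - y) ⬝ᵥ (X *ᵥ w - y) + lam * h w

/-- `‖S_A z‖² = ∑_{i ∈ A} ‖S_i z‖²`, the quadratic form of `S_Aᵀ S_A`. -/
def encSq {n r m : ℕ} (S : Fin m → Matrix (Fin r) (Fin n) ℝ) (A : Finset (Fin m))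
    (z : Fin n → ℝ) : ℝ :=
  ∑ i ∈ A, (S i *ᵥ z) ⬝ᵥ (S i *ᵥ z)

/-- The encoded objective `f̃^A(w) = ‖S_A(Xw − y)‖² + λ h(w)`. -/
def objTilde {n p r m : ℕ} (X : Matrix (Fin n) (Fin p) ℝ) (y : Fin n → ℝ)
    (S : Fin m → Matrix (Fin r) (Fin n) ℝ) (lam : ℝ) (h : (Fin p → ℝ) → ℝ)
    (A : Finset (Fin m)) (w : Fin p → ℝ) : ℝ :=
  encSq S A (X *ᵥ w - y) + lam * h w

/-- Lemma 4: from per-iteration geometric decrease on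
the instantaneous encoded objectives to convergence of the original
objective. -/
theorem encoded_descent_to_original_convergence
    {n p r m : ℕ}
    (X : Matrix (Fin n) (Fin p) ℝ) (y : Fin n → ℝ)
    (S : Fin m → Matrix (Fin r) (Fin n) ℝ)
    (η ε lam γ κ : ℝ)
    (h : (Fin p → ℝ) → ℝ)
    (A : ℕ → Finset (Fin m)) (w : ℕ → Fin p → ℝ)
    (wt : ℕ → Fin p → ℝ) (wstar : Fin p → ℝ)
    -- BRIP parameters
    (hη0 : 0 < η) (hη1 : η ≤ 1) (hε0 : 0 < ε) (hε1 : ε < 1)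
    -- BRIP condition
    (hBRIP : ∀ B : Finset (Fin m), η * m ≤ (B.card : ℝ) →
      ∀ z : Fin n → ℝ,
        (1 - ε) * (z ⬝ᵥ z) ≤ encSq S B z ∧ encSq S B z ≤ (1 + ε) * (z ⬝ᵥ z))
    (hA : ∀ t, η * m ≤ (((A t).card : ℕ) : ℝ))
    -- h is convex and nonnegative, λ ≥ 0
    (hconv : ConvexOn ℝ Set.univ h) (hh : ∀ v, 0 ≤ h v) (hlam : 0 ≤ lam)
    -- w̃*_t is a minimizer of f̃^{A_t}
    (hopt : ∀ t, ∀ u : Fin p → ℝ,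
      objTilde X y S lam h (A t) (wt t) ≤ objTilde X y S lam h (A t) u)
    -- w* is a minimizer of f
    (hwstar : ∀ u, objF X y lam h wstar ≤ objF X y lam h u)
    -- (via the auxiliary minimizers) f(w̃*_t) ≤ κ² f(w*)
    (hbound : ∀ t, objF X y lam h (wt t) ≤ κ ^ 2 * objF X y lam h wstar)
    -- geometric per-iteration decrease on each instantaneous problem
    (hγ0 : 0 < γ) (hγ1 : γ < 1)
    (hdec : ∀ t,
      objTilde X y S lam h (A t) (w (t + 1)) - objTilde X y S lam h (A t) (wt t) ≤
        γ * (objTilde X y S lam h (A t) (w t) - objTilde X y S lam h (A t) (wt t)))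
    -- κ = (1+ε)/(1−ε) with κγ < 1
    (hκ : κ = (1 + ε) / (1 - ε)) (hκγ : κ * γ < 1) :
    ∀ t : ℕ, 1 ≤ t →
      objF X y lam h (w t) ≤
        (κ * γ) ^ t * objF X y lam h (w 0) +
          (κ ^ 2 * (κ - γ) / (1 - κ * γ)) * objF X y lam h wstar := by
  have hε' : (0:ℝ) < 1 - ε := by linarith
  have hκ1 : 1 ≤ κ := by
    rw [hκ, le_div_iff₀ hε']; linarith
  have hκγ0 : 0 < 1 - κ * γ := by linarith
  have hF0 : ∀ v, 0 ≤ objF X y lam h v := by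
    intro v
    unfold objF
    have h1 : 0 ≤ (X *ᵥ v - y) ⬝ᵥ (X *ᵥ v - y) := by
      unfold dotProduct
      exact Finset.sum_nonneg fun i _ => mul_self_nonneg _
    have := hh v
    nlinarith
  set c := κ * (1 - γ) / (1 - κ * γ) with hc
  have hc0 : 0 ≤ c := by
    apply div_nonneg _ (le_of_lt hκγ0)
    nlinarith
  have hstep : ∀ t, objF X y lam h (w (t + 1)) ≤
      κ * γ * objF X y lam h (w t) + κ * (1 - γ) * objF X y lam h wstar := by
    intro t
    obtain ⟨hl1, -⟩ := hBRIP (A t) (hA t) (X *ᵥ (w (t + 1)) - y)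
    obtain ⟨-, hu1⟩ := hBRIP (A t) (hA t) (X *ᵥ (w t) - y)
    obtain ⟨-, hu2⟩ := hBRIP (A t) (hA t) (X *ᵥ wstar - y)
    have hlow : (1 - ε) * objF X y lam h (w (t + 1)) ≤ objTilde X y S lam h (A t) (w (t + 1)) := by
      unfold objF objTilde
      have h0 := mul_nonneg (le_of_lt hε0) (mul_nonneg hlam (hh (w (t + 1))))
      nlinarith
    have hupt : objTilde X y S lam h (A t) (w t) ≤ (1 + ε) * objF X y lam h (w t) := by
      unfold objF objTilde
      have h0 := mul_nonneg (le_of_lt hε0) (mul_nonneg hlam (hh (w t)))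
      nlinarith
    have hups : objTilde X y S lam h (A t) (wt t) ≤ (1 + ε) * objF X y lam h wstar := by
      have h1 := hopt t wstar
      have h2 : objTilde X y S lam h (A t) wstar ≤ (1 + ε) * objF X y lam h wstar := by
        unfold objF objTilde
        have h0 := mul_nonneg (le_of_lt hε0) (mul_nonneg hlam (hh wstar))
        nlinarith
      linarith
    have hd := hdec t
    have key : (1 - ε) * objF X y lam h (w (t + 1)) ≤
        γ * (1 + ε) * objF X y lam h (w t) + (1 - γ) * (1 + ε) * objF X y lam h wstar := by
      nlinarith [hF0 (w t), hF0 wstar]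
    have heq : (1 - ε) * (κ * γ * objF X y lam h (w t) + κ * (1 - γ) * objF X y lam h wstar)
        = γ * (1 + ε) * objF X y lam h (w t) + (1 - γ) * (1 + ε) * objF X y lam h wstar := by
      rw [hκ]; field_simp
    have := heq ▸ key
    exact (mul_le_mul_iff_right₀ hε').mp (by linarith)
  have hκγnn : (0:ℝ) ≤ κ * γ := by nlinarith
  have hcfix : κ * γ * c + κ * (1 - γ) = c := by
    rw [hc]; field_simp; ring
  have main : ∀ t, objF X y lam h (w t) ≤ (κ * γ) ^ t * objF X y lam h (w 0) + c * objF X y lam h wstar := by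
    intro t
    induction t with
    | zero =>
      simp only [pow_zero, one_mul]
      nlinarith [hF0 wstar]
    | succ t ih =>
      have hs := hstep t
      have h2 := mul_le_mul_of_nonneg_left ih hκγnn
      have h3 : (κ * γ * c + κ * (1 - γ)) * objF X y lam h wstar = c * objF X y lam h wstar := by
        rw [hcfix]
      rw [pow_succ]
      nlinarith [h3]
  intro t ht
  have hm := main t
  have hcle : c * objF X y lam h wstar ≤ κ ^ 2 * (κ - γ) / (1 - κ * γ) * objF X y lam h wstar := by
    apply mul_le_mul_of_nonneg_right _ (hF0 wstar)
    rw [hc, div_le_div_iff₀ hκγ0 hκγ0]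
    have key : 0 ≤ κ * (κ - 1) * (κ + 1 - γ) * (1 - κ * γ) := by
      apply mul_nonneg
      apply mul_nonneg
      apply mul_nonneg <;> linarith
      all_goals linarith
    nlinarith [key]
  linarith

end Stmt13
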